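/- Let (Ω, μ) be a measure space, let θ > 0, ε ∈ (0,1), and let ρ, c : Ω → ℝ be measurable with ρ ≥ 0 μ-a.e. Then the (extended-real-valued Lebesgue) integrals satisfy ∫ ρ·(max(|c|−1, 0))² dμ ≤ (ε(2−ε)/θ)² · ∫ ρ·(F_ε'(c))² dμ. -/

import Mathlib

open Real Set Filter MeasureTheory

/-- The Flory–Huggins potential. -/
noncomputable def FH (θ s : ℝ) : ℝ :=
  (θ / 2) * ((1 + s) * Real.log (1 + s) + (1 - s) * Real.log (1 - s))

/-- Its first derivative on `(-1,1)`. -/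
noncomputable def FH' (θ s : ℝ) : ℝ :=
  (θ / 2) * Real.log ((1 + s) / (1 - s))

/-- The regularized (quadratic extension) Flory–Huggins potential `F_ε`.
Note that `F''(±(1-ε)) = θ/(ε(2-ε))`. -/
noncomputable def FHreg (θ ε s : ℝ) : ℝ :=
  if 1 - ε < s then
    FH θ (1 - ε) + FH' θ (1 - ε) * (s - (1 - ε))
      + (1 / 2) * (θ / (ε * (2 - ε))) * (s - (1 - ε)) ^ 2
  else if s < -1 + ε then
    FH θ (-1 + ε) + FH' θ (-1 + ε) * (s - (-1 + ε))
      + (1 / 2) * (θ / (ε * (2 - ε))) * (s - (-1 + ε)) ^ 2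
  else FH θ s

lemma quadDeriv (A B C a s : ℝ) :
    HasDerivAt (fun x => A + B * (x - a) + (1 / 2) * C * (x - a) ^ 2)
      (B + C * (s - a)) s := by
  have h : HasDerivAt (fun x : ℝ => x - a) 1 s := (hasDerivAt_id s).sub_const a
  have h2 := ((h.const_mul B).const_add A).add ((h.pow 2).const_mul ((1/2)*C))
  refine h2.congr_deriv ?_
  norm_num
  ring

lemma deriv_FHreg_gt (θ ε s : ℝ) (h : 1 - ε < s) :
    deriv (FHreg θ ε) s = FH' θ (1 - ε) + (θ / (ε * (2 - ε))) * (s - (1 - ε)) := by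
  have hev : FHreg θ ε =ᶠ[nhds s]
      fun x => FH θ (1 - ε) + FH' θ (1 - ε) * (x - (1 - ε))
        + (1 / 2) * (θ / (ε * (2 - ε))) * (x - (1 - ε)) ^ 2 := by
    filter_upwards [Ioi_mem_nhds h] with x hx
    simp only [FHreg, if_pos (mem_Ioi.mp hx)]
  rw [hev.deriv_eq]
  exact (quadDeriv _ _ _ _ _).deriv

lemma deriv_FHreg_lt (θ ε s : ℝ) (hε1 : ε < 1) (h : s < -1 + ε) :
    deriv (FHreg θ ε) s = FH' θ (-1 + ε) + (θ / (ε * (2 - ε))) * (s - (-1 + ε)) := by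
  have hev : FHreg θ ε =ᶠ[nhds s]
      fun x => FH θ (-1 + ε) + FH' θ (-1 + ε) * (x - (-1 + ε))
        + (1 / 2) * (θ / (ε * (2 - ε))) * (x - (-1 + ε)) ^ 2 := by
    filter_upwards [Iio_mem_nhds h] with x hx
    have hx' : x < -1 + ε := mem_Iio.mp hx
    have h1 : ¬ (1 - ε < x) := by linarith
    simp only [FHreg, if_neg h1, if_pos hx']
  rw [hev.deriv_eq]
  exact (quadDeriv _ _ _ _ _).deriv

lemma key_pointwise (θ ε : ℝ) (hθ : 0 < θ) (hε0 : 0 < ε) (hε1 : ε < 1) (s : ℝ) :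
    max (|s| - 1) 0 ^ 2 ≤ (ε * (2 - ε) / θ) ^ 2 * deriv (FHreg θ ε) s ^ 2 := by
  have hK : 0 < ε * (2 - ε) := by nlinarith
  rcases le_or_gt (|s|) 1 with h | h
  · have hm : max (|s| - 1) 0 = 0 := max_eq_right (by linarith)
    rw [hm]
    have hX : (0:ℝ) ≤ (ε * (2 - ε) / θ) ^ 2 * deriv (FHreg θ ε) s ^ 2 := by positivity
    simpa using hX
  · have hmax : max (|s| - 1) 0 = |s| - 1 := max_eq_left (by linarith)
    rcases lt_abs.mp h with hs | hs
    · -- s > 1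
      rw [deriv_FHreg_gt θ ε s (by linarith)]
      have habs : |s| = s := abs_of_pos (by linarith)
      have hF : 0 ≤ FH' θ (1 - ε) := by
        unfold FH'
        have h1 : (1 : ℝ) ≤ (1 + (1 - ε)) / (1 - (1 - ε)) := by
          rw [le_div_iff₀ (by linarith)]; linarith
        exact mul_nonneg (by linarith) (Real.log_nonneg h1)
      set d := FH' θ (1 - ε) + θ / (ε * (2 - ε)) * (s - (1 - ε)) with hd
      have h1 : θ / (ε * (2 - ε)) * (s - 1) ≤ d := by
        have : θ / (ε * (2 - ε)) * (s - 1) ≤ θ / (ε * (2 - ε)) * (s - (1 - ε)) :=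
          mul_le_mul_of_nonneg_left (by linarith) (by positivity)
        linarith
      have h2 : s - 1 ≤ (ε * (2 - ε) / θ) * d := by
        have h3 := mul_le_mul_of_nonneg_left h1 (le_of_lt (div_pos hK hθ))
        calc s - 1 = (ε * (2 - ε) / θ) * (θ / (ε * (2 - ε)) * (s - 1)) := by
              rw [← mul_assoc, div_mul_div_comm, mul_comm θ, div_self (mul_pos hK hθ).ne', one_mul]
          _ ≤ _ := h3
      rw [hmax, habs]
      calc (s - 1) ^ 2 ≤ ((ε * (2 - ε) / θ) * d) ^ 2 :=
            pow_le_pow_left₀ (by linarith) h2 2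
        _ = _ := by ring
    · -- s < -1
      have hs' : s < -1 := by linarith
      rw [deriv_FHreg_lt θ ε s hε1 (by linarith)]
      have habs : |s| = -s := abs_of_neg (by linarith)
      have hF : FH' θ (-1 + ε) ≤ 0 := by
        unfold FH'
        have h1 : (1 + (-1 + ε)) / (1 - (-1 + ε)) ≤ 1 := by
          rw [div_le_one (by linarith)]; linarith
        have h0 : (0 : ℝ) ≤ (1 + (-1 + ε)) / (1 - (-1 + ε)) := by
          apply div_nonneg <;> linarith
        exact mul_nonpos_of_nonneg_of_nonpos (by linarith) (Real.log_nonpos h0 h1)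
      set d := FH' θ (-1 + ε) + θ / (ε * (2 - ε)) * (s - (-1 + ε)) with hd
      have h1 : d ≤ θ / (ε * (2 - ε)) * (s + 1) := by
        have : θ / (ε * (2 - ε)) * (s - (-1 + ε)) ≤ θ / (ε * (2 - ε)) * (s + 1) :=
          mul_le_mul_of_nonneg_left (by linarith) (by positivity)
        linarith
      have h1' : θ / (ε * (2 - ε)) * (-s - 1) ≤ -d := by linarith
      have h2 : -s - 1 ≤ (ε * (2 - ε) / θ) * (-d) := by
        have h3 := mul_le_mul_of_nonneg_left h1' (le_of_lt (div_pos hK hθ))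
        calc -s - 1 = (ε * (2 - ε) / θ) * (θ / (ε * (2 - ε)) * (-s - 1)) := by
              rw [← mul_assoc, div_mul_div_comm, mul_comm θ, div_self (mul_pos hK hθ).ne', one_mul]
          _ ≤ _ := h3
      rw [hmax, habs]
      calc (-s - 1) ^ 2 ≤ ((ε * (2 - ε) / θ) * (-d)) ^ 2 :=
            pow_le_pow_left₀ (by linarith) h2 2
        _ = _ := by ring

theorem excess_concentration_bound (θ ε : ℝ) (hθ : 0 < θ) (hε : ε ∈ Set.Ioo (0 : ℝ) 1)
    {Ω : Type*} [MeasurableSpace Ω] (μ : Measure Ω)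
    (ρ c : Ω → ℝ) (hρ : Measurable ρ) (hc : Measurable c)
    (hρ0 : ∀ᵐ x ∂μ, 0 ≤ ρ x) :
    ∫⁻ x, ENNReal.ofReal (ρ x * max (|c x| - 1) 0 ^ 2) ∂μ ≤
      ENNReal.ofReal ((ε * (2 - ε) / θ) ^ 2) *
        ∫⁻ x, ENNReal.ofReal (ρ x * deriv (FHreg θ ε) (c x) ^ 2) ∂μ := by
  obtain ⟨hε0, hε1⟩ := hε
  calc ∫⁻ x, ENNReal.ofReal (ρ x * max (|c x| - 1) 0 ^ 2) ∂μ
      ≤ ∫⁻ x, ENNReal.ofReal ((ε * (2 - ε) / θ) ^ 2) *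
          ENNReal.ofReal (ρ x * deriv (FHreg θ ε) (c x) ^ 2) ∂μ := by
        apply lintegral_mono_ae
        filter_upwards [hρ0] with x hρx
        rw [← ENNReal.ofReal_mul (by positivity)]
        apply ENNReal.ofReal_le_ofReal
        have := key_pointwise θ ε hθ hε0 hε1 (c x)
        calc ρ x * max (|c x| - 1) 0 ^ 2
            ≤ ρ x * ((ε * (2 - ε) / θ) ^ 2 * deriv (FHreg θ ε) (c x) ^ 2) :=
              mul_le_mul_of_nonneg_left this hρx
          _ = (ε * (2 - ε) / θ) ^ 2 * (ρ x * deriv (FHreg θ ε) (c x) ^ 2) := by ring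
    _ = ENNReal.ofReal ((ε * (2 - ε) / θ) ^ 2) *
        ∫⁻ x, ENNReal.ofReal (ρ x * deriv (FHreg θ ε) (c x) ^ 2) ∂μ :=
      lintegral_const_mul' _ _ ENNReal.ofReal_ne_top
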